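/- Assume n > 0, γ > 1, μ := λ-1 satisfies 0 < μ < (κ+n)/2 (condition A), μ < n(γ-1)/2 (condition B), and α := (μ + (κ/2)(γ-1))/γ > 0 (condition C). Then 0 < μ/(n·W*) < σ < k3/α, where W* = 1 + (κ - 2μ)/(nγ), σ = γμ/(κ+n), and k3 = (γ-1)μ/2. -/

import Mathlib

theorem stmt_4 (n γ lam κ : ℝ) (hn : 0 < n) (hγ : 1 < γ) (hlam : 1 < lam)
    (μ Wstar σ k3 α : ℝ)
    (hμ : μ = lam - 1)
    (hW : Wstar = 1 + (κ - 2*μ)/(n*γ))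
    (hσ : σ = γ*μ/(κ+n))
    (hk3 : k3 = (γ-1)*μ/2)
    (hα : α = (μ + (κ/2)*(γ-1))/γ)
    (hA : 0 < μ ∧ μ < (κ+n)/2)
    (hB : μ < n*(γ-1)/2)
    (hC : 0 < α) :
    0 < μ/(n*Wstar) ∧ μ/(n*Wstar) < σ ∧ σ < k3/α := by
  obtain ⟨hμ0, hμ2⟩ := hA
  have hγ0 : (0:ℝ) < γ := by linarith
  have hκn : 0 < κ + n := by linarith
  have hnγ : 0 < n * γ := mul_pos hn hγ0
  have hWval : Wstar = (n*γ + κ - 2*μ)/(n*γ) := by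
    rw [hW]; field_simp; ring
  have hWnum : 0 < n*γ + κ - 2*μ := by nlinarith
  have hW0 : 0 < Wstar := by rw [hWval]; positivity
  have hnW : 0 < n * Wstar := mul_pos hn hW0
  have hnum : 0 < μ + (κ/2)*(γ-1) := by
    have h := mul_pos hC hγ0
    rw [hα, div_mul_cancel₀ _ (ne_of_gt hγ0)] at h
    exact h
  refine ⟨div_pos hμ0 hnW, ?_, ?_⟩
  · rw [hσ, div_lt_div_iff₀ hnW hκn]
    have : n * Wstar = (n*γ + κ - 2*μ)/γ := by
      rw [hWval]; field_simp
    rw [this]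
    have h2 : γ * μ * ((n*γ + κ - 2*μ)/γ) = μ * (n*γ + κ - 2*μ) := by
      field_simp
    rw [h2]
    nlinarith
  · rw [lt_div_iff₀ hC, hσ, hα, hk3, div_mul_div_comm, div_lt_div_iff₀ (by positivity) (by norm_num : (0:ℝ) < 2)]
    nlinarith [mul_pos hμ0 (mul_pos hγ0 hγ0)]
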